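/- arXiv:2011.04889 — 4 statements merged into one kernel-verified Lean document; each statement's English description precedes it below -/
import Mathlib

section
/- For F a distribution with finite first moment and 0 ≤ a < b ≤ 1, the left-quantile function of the (a,b)-concentration F^{(a,b)} equals F^{-1}(t) for t ∉ (a,b] and equals (1/(b-a))·∫_a^b F^{-1}(u) du for t ∈ (a,b]. -/
open MeasureTheory Set Classical

/-- Left-quantile function of a distribution on ℝ. -/
noncomputable def leftQuantile (μ : Measure ℝ) (p : ℝ) : ℝ :=
  sInf {x : ℝ | p ≤ (μ (Iic x)).toReal}

/-- The uniform distribution on [0,1]. -/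
noncomputable def unif01 : Measure ℝ := volume.restrict (Icc (0:ℝ) 1)

/-- The C-concentration of a distribution: the law of
`F⁻¹(U)·1_{U∉C} + E[F⁻¹(U) | U∈C]·1_{U∈C}` with `U` uniform on [0,1]. -/

noncomputable def concentration (μ : Measure ℝ) (C : Set ℝ) : Measure ℝ :=
  Measure.map
    (fun u => if u ∈ C then (∫ t in C, leftQuantile μ t) / (volume C).toReal
      else leftQuantile μ u) unif01

open ProbabilityTheory Filter Topology

section Aux

variable {μ : Measure ℝ} [IsProbabilityMeasure μ]

lemma lq_eq (μ : Measure ℝ) [IsProbabilityMeasure μ] (p : ℝ) :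
    leftQuantile μ p = sInf {x : ℝ | p ≤ cdf μ x} := by
  simp only [leftQuantile, cdf_eq_real, measureReal_def]

lemma S_nonempty {p : ℝ} (hp : p < 1) : {x : ℝ | p ≤ cdf μ x}.Nonempty := by
  have h : ∀ᶠ x in atTop, p ≤ cdf μ x :=
    (tendsto_cdf_atTop μ).eventually (eventually_ge_nhds hp)
  exact h.exists

lemma S_bddBelow {p : ℝ} (hp : 0 < p) : BddBelow {x : ℝ | p ≤ cdf μ x} := by
  have h : ∀ᶠ x in atBot, cdf μ x < p :=
    (tendsto_cdf_atBot μ).eventually (eventually_lt_nhds hp)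
  obtain ⟨x₀, hx₀⟩ := h.exists
  refine ⟨x₀, fun x hx => ?_⟩
  by_contra hlt
  push_neg at hlt
  exact absurd (hx.trans (monotone_cdf μ hlt.le)) (not_le.2 hx₀)

lemma lq_mem {p : ℝ} (hp0 : 0 < p) (hp1 : p < 1) : p ≤ cdf μ (leftQuantile μ p) := by
  rw [lq_eq]
  have key : ∀ x ∈ Ioi (sInf {x : ℝ | p ≤ cdf μ x}), p ≤ cdf μ x := by
    intro x hx
    obtain ⟨y, hyS, hyx⟩ := (csInf_lt_iff (S_bddBelow hp0) (S_nonempty hp1)).mp hx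
    exact hyS.trans (monotone_cdf μ hyx.le)
  have hc : Tendsto (cdf μ) (𝓝[>] (sInf {x : ℝ | p ≤ cdf μ x}))
      (𝓝 (cdf μ (sInf {x : ℝ | p ≤ cdf μ x}))) :=
    ((cdf μ).right_continuous _).tendsto.mono_left (nhdsWithin_mono _ Ioi_subset_Ici_self)
  exact ge_of_tendsto hc (eventually_nhdsWithin_of_forall key)

lemma lq_le_iff {p x : ℝ} (hp0 : 0 < p) (hp1 : p < 1) :
    leftQuantile μ p ≤ x ↔ p ≤ cdf μ x := by
  constructor
  · intro h; exact (lq_mem hp0 hp1).trans (monotone_cdf μ h)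
  · intro h; rw [lq_eq]; exact csInf_le (S_bddBelow hp0) h

lemma lq_mono {p q : ℝ} (hp0 : 0 < p) (hq1 : q < 1) (hpq : p ≤ q) :
    leftQuantile μ p ≤ leftQuantile μ q :=
  (lq_le_iff hp0 (lt_of_le_of_lt hpq hq1)).mpr
    ((hpq.trans (lq_mem (hp0.trans_le hpq) hq1)))

lemma lq_zero_of_nonpos (μ : Measure ℝ) {p : ℝ} (hp : p ≤ 0) : leftQuantile μ p = 0 := by
  have h : {x : ℝ | p ≤ (μ (Iic x)).toReal} = univ :=
    eq_univ_of_forall fun x => hp.trans ENNReal.toReal_nonneg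
  rw [leftQuantile, h]
  refine Real.sInf_of_not_bddBelow ?_
  rintro ⟨c, hc⟩
  have := hc (mem_univ (c - 1))
  linarith

lemma lq_zero_of_one_lt {p : ℝ} (hp : 1 < p) : leftQuantile μ p = 0 := by
  have h : {x : ℝ | p ≤ (μ (Iic x)).toReal} = ∅ := by
    refine eq_empty_of_forall_notMem fun x hx => ?_
    have h1 : (μ (Iic x)).toReal ≤ (μ univ).toReal :=
      ENNReal.toReal_mono (measure_ne_top μ univ) (measure_mono (subset_univ _))
    rw [measure_univ, ENNReal.toReal_one] at h1
    exact absurd (le_trans hx h1) (not_le.2 hp)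
  rw [leftQuantile, h, Real.sInf_empty]

lemma measurable_lq : Measurable (leftQuantile μ) := by
  apply measurable_of_Iic
  intro y
  have hA : MeasurableSet {p : ℝ | p ∈ Ioo (0:ℝ) 1 ∧ leftQuantile μ p ≤ y} := by
    apply Set.OrdConnected.measurableSet
    constructor
    intro p hp q hq z hz
    exact ⟨⟨hp.1.1.trans_le hz.1, lt_of_le_of_lt hz.2 hq.1.2⟩,
      (lq_mono (hp.1.1.trans_le hz.1) hq.1.2 hz.2).trans hq.2⟩
  have hEq : leftQuantile μ ⁻¹' Iic y =
      {p : ℝ | p ∈ Ioo (0:ℝ) 1 ∧ leftQuantile μ p ≤ y} ∪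
      ({1} ∩ leftQuantile μ ⁻¹' Iic y) ∪
      ((Iic (0:ℝ) ∪ Ioi 1) ∩ {_p : ℝ | (0:ℝ) ≤ y}) := by
    ext p
    simp only [mem_union, mem_inter_iff, mem_preimage, mem_Iic, mem_setOf_eq,
      mem_singleton_iff, mem_Ioi, mem_Ioo]
    constructor
    · intro hp
      by_cases h0 : 0 < p
      · by_cases h1 : p < 1
        · exact Or.inl (Or.inl ⟨⟨h0, h1⟩, hp⟩)
        · by_cases he : p = 1
          · exact Or.inl (Or.inr ⟨he, hp⟩)
          · have h2 : 1 < p := lt_of_le_of_ne (not_lt.1 h1) (Ne.symm he)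
            refine Or.inr ⟨Or.inr h2, ?_⟩
            rwa [lq_zero_of_one_lt h2] at hp
      · refine Or.inr ⟨Or.inl (not_lt.1 h0), ?_⟩
        rwa [lq_zero_of_nonpos μ (not_lt.1 h0)] at hp
    · rintro ((⟨-, h⟩ | ⟨-, h⟩) | ⟨hc, hy⟩)
      · exact h
      · exact h
      · rcases hc with h | h
        · rw [lq_zero_of_nonpos μ h]; exact hy
        · rw [lq_zero_of_one_lt h]; exact hy
  rw [hEq]
  refine (hA.union ?_).union ?_
  · exact Set.Subsingleton.measurableSet
      (Set.subsingleton_singleton.anti inter_subset_left)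
  · refine (measurableSet_Iic.union measurableSet_Ioi).inter ?_
    by_cases hy : (0:ℝ) ≤ y
    · simp [hy]
    · simp [hy]

lemma map_lq : Measure.map (leftQuantile μ) (volume.restrict (Ioo (0:ℝ) 1)) = μ := by
  have hprob : IsProbabilityMeasure (volume.restrict (Ioo (0:ℝ) 1)) :=
    ⟨by simp [Real.volume_Ioo]⟩
  have hmap : IsProbabilityMeasure
      (Measure.map (leftQuantile μ) (volume.restrict (Ioo (0:ℝ) 1))) :=
    Measure.isProbabilityMeasure_map measurable_lq.aemeasurable
  refine Measure.ext_of_Iic _ μ (fun x => ?_)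
  rw [Measure.map_apply measurable_lq measurableSet_Iic,
    Measure.restrict_apply (measurable_lq measurableSet_Iic)]
  have hc0 : 0 ≤ cdf μ x := cdf_nonneg μ x
  have hc1 : cdf μ x ≤ 1 := cdf_le_one μ x
  have hle : volume (leftQuantile μ ⁻¹' Iic x ∩ Ioo 0 1) ≤ ENNReal.ofReal (cdf μ x) := by
    have hsub : leftQuantile μ ⁻¹' Iic x ∩ Ioo 0 1 ⊆ Ioc 0 (cdf μ x) := by
      rintro u ⟨hu, hu0, hu1⟩
      exact ⟨hu0, (lq_le_iff hu0 hu1).mp hu⟩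
    calc volume (leftQuantile μ ⁻¹' Iic x ∩ Ioo 0 1) ≤ volume (Ioc 0 (cdf μ x)) :=
      measure_mono hsub
    _ = ENNReal.ofReal (cdf μ x) := by rw [Real.volume_Ioc, sub_zero]
  have hge : ENNReal.ofReal (cdf μ x) ≤ volume (leftQuantile μ ⁻¹' Iic x ∩ Ioo 0 1) := by
    have hsub : Ioo 0 (cdf μ x) ⊆ leftQuantile μ ⁻¹' Iic x ∩ Ioo 0 1 := by
      rintro u ⟨hu0, hu1⟩
      have hu1' : u < 1 := lt_of_lt_of_le hu1 hc1
      exact ⟨(lq_le_iff hu0 hu1').mpr hu1.le, hu0, hu1'⟩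
    calc ENNReal.ofReal (cdf μ x) = volume (Ioo 0 (cdf μ x)) := by
          rw [Real.volume_Ioo, sub_zero]
    _ ≤ _ := measure_mono hsub
  rw [le_antisymm hle hge, ofReal_cdf]

lemma integrable_lq (hμ : Integrable id μ) :
    Integrable (leftQuantile μ) (volume.restrict (Ioo (0:ℝ) 1)) := by
  have h := hμ
  rw [← map_lq (μ := μ)] at h
  exact (integrable_map_measure aestronglyMeasurable_id measurable_lq.aemeasurable).mp h

end Aux
/-- the left-quantile function of the (a,b)-concentration. -/
theorem leftQuantile_concentration (μ : Measure ℝ) [IsProbabilityMeasure μ]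
    (hμ : Integrable id μ) (a b : ℝ) (ha : 0 ≤ a) (hab : a < b) (hb : b ≤ 1) :
    ∀ t ∈ Icc (0:ℝ) 1,
      leftQuantile (concentration μ (Ioo a b)) t =
        if t ∈ Ioc a b then (∫ u in Ioo a b, leftQuantile μ u) / (b - a)
        else leftQuantile μ t := by
  have hvol : (volume (Ioo a b)).toReal = b - a := by
    rw [Real.volume_Ioo, ENNReal.toReal_ofReal (by linarith)]
  set m : ℝ := (∫ u in Ioo a b, leftQuantile μ u) / (b - a) with hmdef
  set g : ℝ → ℝ := fun u => @ite _ (u ∈ Ioo a b) (Classical.propDecidable _) m (leftQuantile μ u) with hgdef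
  have hconc : concentration μ (Ioo a b) = Measure.map g unif01 := by
    unfold concentration
    congr 1
    funext u
    rw [hvol]
  have hInt : Integrable (leftQuantile μ) (volume.restrict (Ioo a b)) :=
    (integrable_lq hμ).mono_measure (Measure.restrict_mono (Ioo_subset_Ioo ha hb) le_rfl)
  have hQa_le_m : 0 < a → leftQuantile μ a ≤ m := by
    intro ha0
    have hconst : IntegrableOn (fun _ : ℝ => leftQuantile μ a) (Ioo a b) volume := by
      refine integrableOn_const (ne_of_lt ?_)
      rw [Real.volume_Ioo]; exact ENNReal.ofReal_lt_top
    have h1 : ∫ _ in Ioo a b, leftQuantile μ a ≤ ∫ u in Ioo a b, leftQuantile μ u := by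
      refine setIntegral_mono_on hconst hInt measurableSet_Ioo ?_
      intro s hs
      exact lq_mono ha0 (lt_of_lt_of_le hs.2 hb) hs.1.le
    rw [setIntegral_const, measureReal_def, hvol, smul_eq_mul] at h1
    rw [hmdef, le_div_iff₀ (by linarith)]
    linarith
  have hm_le_Qb : b < 1 → m ≤ leftQuantile μ b := by
    intro hb1
    have hconst : IntegrableOn (fun _ : ℝ => leftQuantile μ b) (Ioo a b) volume := by
      refine integrableOn_const (ne_of_lt ?_)
      rw [Real.volume_Ioo]; exact ENNReal.ofReal_lt_top
    have h1 : ∫ u in Ioo a b, leftQuantile μ u ≤ ∫ _ in Ioo a b, leftQuantile μ b := by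
      refine setIntegral_mono_on hInt hconst measurableSet_Ioo ?_
      intro s hs
      exact lq_mono (lt_of_le_of_lt ha hs.1) hb1 hs.2.le
    rw [setIntegral_const, measureReal_def, hvol, smul_eq_mul] at h1
    rw [hmdef, div_le_iff₀ (by linarith)]
    linarith
  have hgmono : ∀ u v : ℝ, 0 < u → u ≤ v → v < 1 → g u ≤ g v := by
    intro u v hu huv hv1
    by_cases hu' : u ∈ Ioo a b
    · by_cases hv' : v ∈ Ioo a b
      · simp only [hgdef]; rw [if_pos hu', if_pos hv']
      · simp only [hgdef]; rw [if_pos hu', if_neg hv']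
        have hbv : b ≤ v := by
          by_contra hc
          push_neg at hc
          exact hv' ⟨lt_of_lt_of_le hu'.1 huv, hc⟩
        have hb1 : b < 1 := lt_of_le_of_lt hbv hv1
        exact (hm_le_Qb hb1).trans (lq_mono (lt_of_le_of_lt ha hab) hv1 hbv)
    · by_cases hv' : v ∈ Ioo a b
      · simp only [hgdef]; rw [if_neg hu', if_pos hv']
        have hua : u ≤ a := by
          by_contra hc
          push_neg at hc
          exact hu' ⟨hc, lt_of_le_of_lt huv hv'.2⟩
        have ha0 : 0 < a := lt_of_lt_of_le hu hua
        exact (lq_mono hu (lt_of_lt_of_le hab hb) hua).trans (hQa_le_m ha0)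
      · simp only [hgdef]; rw [if_neg hu', if_neg hv']
        exact lq_mono hu hv1 huv
  have hgm : Measurable g := by
    simp only [hgdef]
    exact Measurable.ite measurableSet_Ioo measurable_const measurable_lq
  have hν : ∀ x : ℝ, (Measure.map g unif01) (Iic x) = volume ({u : ℝ | g u ≤ x} ∩ Icc 0 1) := by
    intro x
    rw [Measure.map_apply hgm measurableSet_Iic]
    rw [unif01, Measure.restrict_apply (hgm measurableSet_Iic)]
    rfl
  intro t ht
  rw [hconc]
  rcases eq_or_lt_of_le ht.1 with h0 | ht0
  · have hnot : (0:ℝ) ∉ Ioc a b := fun h => absurd h.1 (not_lt.2 ha)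
    rw [← h0, if_neg hnot, lq_zero_of_nonpos _ le_rfl, lq_zero_of_nonpos _ le_rfl]
  · have hK : {x : ℝ | t ≤ ((Measure.map g unif01) (Iic x)).toReal}
        = {x : ℝ | ∀ s ∈ Ioo (0:ℝ) t, g s ≤ x} := by
      ext x
      simp only [mem_setOf_eq]
      rw [hν]
      constructor
      · intro h s hs
        by_contra hgs
        push_neg at hgs
        have hsub : {u : ℝ | g u ≤ x} ∩ Icc 0 1 ⊆ Ico 0 s ∪ {1} := by
          rintro u ⟨hgu, hu0, hu1⟩
          rcases eq_or_lt_of_le hu1 with h1 | h1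
          · exact Or.inr (by simp [h1.symm])
          · refine Or.inl ⟨hu0, ?_⟩
            by_contra hsu
            push_neg at hsu
            exact absurd ((hgmono s u hs.1 hsu h1).trans hgu) (not_le.2 hgs)
        have hle : volume ({u : ℝ | g u ≤ x} ∩ Icc 0 1) ≤ ENNReal.ofReal s := by
          calc volume ({u : ℝ | g u ≤ x} ∩ Icc 0 1) ≤ volume (Ico 0 s ∪ {1}) :=
                measure_mono hsub
          _ ≤ volume (Ico (0:ℝ) s) + volume ({(1:ℝ)} : Set ℝ) := measure_union_le _ _
          _ = ENNReal.ofReal s := by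
                rw [Real.volume_Ico, Real.volume_singleton, sub_zero, add_zero]
        have h2 := h.trans (ENNReal.toReal_mono ENNReal.ofReal_ne_top hle)
        rw [ENNReal.toReal_ofReal hs.1.le] at h2
        exact absurd h2 (not_le.2 hs.2)
      · intro h
        have hsub : Ioo 0 t ⊆ {u : ℝ | g u ≤ x} ∩ Icc 0 1 :=
          fun u hu => ⟨h u hu, hu.1.le, hu.2.le.trans ht.2⟩
        have hge : ENNReal.ofReal t ≤ volume ({u : ℝ | g u ≤ x} ∩ Icc 0 1) := by
          calc ENNReal.ofReal t = volume (Ioo (0:ℝ) t) := by rw [Real.volume_Ioo, sub_zero]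
          _ ≤ _ := measure_mono hsub
        have hfin : volume ({u : ℝ | g u ≤ x} ∩ Icc 0 1) ≠ ⊤ :=
          ne_top_of_le_ne_top (by rw [Real.volume_Icc]; exact ENNReal.ofReal_ne_top)
            (measure_mono inter_subset_right)
        calc t = (ENNReal.ofReal t).toReal := (ENNReal.toReal_ofReal ht0.le).symm
        _ ≤ _ := ENNReal.toReal_mono hfin hge
    rcases le_or_gt t a with hta | hat
    · have hnot : t ∉ Ioc a b := fun h => absurd h.1 (not_lt.2 hta)
      rw [if_neg hnot]
      have hset : {x : ℝ | ∀ s ∈ Ioo (0:ℝ) t, g s ≤ x} = {x : ℝ | t ≤ cdf μ x} := by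
        ext x
        simp only [mem_setOf_eq]
        constructor
        · intro h
          by_contra hc
          push_neg at hc
          have hc0 : 0 ≤ cdf μ x := cdf_nonneg μ x
          have hs0 : 0 < (cdf μ x + t) / 2 := by linarith
          have hst : (cdf μ x + t) / 2 < t := by linarith
          have hsab : (cdf μ x + t) / 2 ∉ Ioo a b := fun hmem =>
            absurd hmem.1 (not_lt.2 (le_trans hst.le hta))
          have h2 := h _ ⟨hs0, hst⟩
          simp only [hgdef, if_neg hsab] at h2
          have h3 := (lq_le_iff hs0 (by linarith : (cdf μ x + t) / 2 < 1)).mp h2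
          linarith
        · intro h s hs
          have hsab : s ∉ Ioo a b := fun hmem =>
            absurd hmem.1 (not_lt.2 (le_of_lt (lt_of_lt_of_le hs.2 hta)))
          simp only [hgdef, if_neg hsab]
          exact (lq_le_iff hs.1 (by linarith [hs.2] : s < 1)).mpr
            (le_trans (le_of_lt hs.2) h)
      unfold leftQuantile
      rw [hK, hset]
      simp only [cdf_eq_real, measureReal_def]
    · rcases le_or_gt t b with htb | hbt
      · have hmem : t ∈ Ioc a b := ⟨hat, htb⟩
        rw [if_pos hmem]
        have hset : {x : ℝ | ∀ s ∈ Ioo (0:ℝ) t, g s ≤ x} = Ici m := by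
          ext x
          simp only [mem_setOf_eq, mem_Ici]
          constructor
          · intro h
            have hs0 : (a + t) / 2 ∈ Ioo (0:ℝ) t := ⟨by linarith, by linarith⟩
            have hsab : (a + t) / 2 ∈ Ioo a b := ⟨by linarith, by linarith⟩
            have h2 := h _ hs0
            simpa only [hgdef, if_pos hsab] using h2
          · intro hx s hs
            by_cases hsab : s ∈ Ioo a b
            · simpa only [hgdef, if_pos hsab] using hx
            · have hsa : s ≤ a := by
                by_contra hc
                push_neg at hc
                exact hsab ⟨hc, lt_of_lt_of_le hs.2 htb⟩
              have ha0 : 0 < a := lt_of_lt_of_le hs.1 hsa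
              simp only [hgdef, if_neg hsab]
              exact ((lq_mono hs.1 (lt_of_lt_of_le hab hb) hsa).trans (hQa_le_m ha0)).trans hx
        unfold leftQuantile
        rw [hK, hset, csInf_Ici]
      · have hnot : t ∉ Ioc a b := fun h => absurd h.2 (not_le.2 hbt)
        rw [if_neg hnot]
        have hb1 : b < 1 := lt_of_lt_of_le hbt ht.2
        have hset : {x : ℝ | ∀ s ∈ Ioo (0:ℝ) t, g s ≤ x} = {x : ℝ | t ≤ cdf μ x} := by
          ext x
          simp only [mem_setOf_eq]
          constructor
          · intro h
            by_contra hc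
            push_neg at hc
            have hMt : max (cdf μ x) b < t := max_lt hc hbt
            set s := (max (cdf μ x) b + t) / 2 with hs
            have hMs : max (cdf μ x) b < s := by rw [hs]; linarith
            have hbs : b < s := lt_of_le_of_lt (le_max_right _ _) hMs
            have hs0 : 0 < s := lt_trans (lt_of_le_of_lt ha hab) hbs
            have hst : s < t := by rw [hs]; linarith
            have hsab : s ∉ Ioo a b := fun hm => absurd hm.2 (not_lt.2 hbs.le)
            have hgs := h s ⟨hs0, hst⟩
            simp only [hgdef, if_neg hsab] at hgs
            have h3 := (lq_le_iff hs0 (lt_of_lt_of_le hst ht.2)).mp hgs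
            have h4 : cdf μ x < s := lt_of_le_of_lt (le_max_left _ _) hMs
            linarith
          · intro h s hs
            by_cases hsab : s ∈ Ioo a b
            · simp only [hgdef, if_pos hsab]
              have hQb : leftQuantile μ b ≤ x :=
                (lq_le_iff (lt_of_le_of_lt ha hab) hb1).mpr (le_trans (le_of_lt hbt) h)
              exact (hm_le_Qb hb1).trans hQb
            · simp only [hgdef, if_neg hsab]
              exact (lq_le_iff hs.1 (lt_of_lt_of_le hs.2 ht.2)).mpr (le_trans hs.2.le h)
        unfold leftQuantile
        rw [hK, hset]
        simp only [cdf_eq_real, measureReal_def]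
end

section
/- There exists a set of distributions on ℝ with finite mean that is closed under concentration but not closed under conditional expectation. Hence closedness under concentration is strictly weaker than closedness under conditional expectation. -/
open MeasureTheory Set Classical

/-- A set of distributions is closed under concentration. -/
def ClosedUnderConcentration (M : Set (Measure ℝ)) : Prop :=
  ∀ μ ∈ M, ∀ C : Set ℝ, C.OrdConnected → C ⊆ Icc 0 1 → concentration μ C ∈ M

/-- A set of distributions is closed under conditional expectation. -/
def ClosedUnderCondExp (M : Set (Measure ℝ)) : Prop :=
  ∀ (Ω : Type) [inst : MeasurableSpace Ω] (P : Measure Ω), IsProbabilityMeasure P →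
    ∀ Y : Ω → ℝ, Measurable Y → Integrable Y P → Measure.map Y P ∈ M →
      ∀ m : MeasurableSpace Ω, m ≤ inst →
        @Measure.map Ω ℝ inst Real.measurableSpace (MeasureTheory.condExp m P Y) P ∈ M

instance : IsProbabilityMeasure unif01 :=
  ⟨by rw [unif01, Measure.restrict_apply_univ, Real.volume_Icc]; norm_num⟩

section Quantile

variable {μ : Measure ℝ} {S : Finset ℝ}

lemma Iic_max_full [IsProbabilityMeasure μ] (hS : μ ((↑S : Set ℝ)ᶜ) = 0) (hne : S.Nonempty) :
    μ (Iic (S.max' hne)) = 1 := by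
  have h1 : μ (Ioi (S.max' hne)) = 0 := by
    refine measure_mono_null ?_ hS
    intro x hx hxS
    exact absurd (S.le_max' x hxS) (not_le.mpr hx)
  have h2 := measure_compl (μ := μ) (measurableSet_Ioi (a := S.max' hne)) (measure_ne_top _ _)
  rw [compl_Ioi] at h2
  rw [h2, h1, measure_univ, tsub_zero]

lemma min_mem_lowerBounds [IsProbabilityMeasure μ] (hS : μ ((↑S : Set ℝ)ᶜ) = 0)
    (hne : S.Nonempty) {p : ℝ} (hp : 0 < p) :
    (S.min' hne) ∈ lowerBounds {x : ℝ | p ≤ (μ (Iic x)).toReal} := by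
  intro x hx
  by_contra hlt
  push_neg at hlt
  have h0 : μ (Iic x) = 0 := by
    refine measure_mono_null ?_ hS
    intro y hy hyS
    exact absurd (S.min'_le y hyS) (not_le.mpr (lt_of_le_of_lt hy hlt))
  simp only [mem_setOf_eq, h0, ENNReal.toReal_zero] at hx
  exact absurd hx (not_le.mpr hp)

lemma max_mem_T [IsProbabilityMeasure μ] (hS : μ ((↑S : Set ℝ)ᶜ) = 0) (hne : S.Nonempty)
    {p : ℝ} (hp : p ≤ 1) : (S.max' hne) ∈ {x : ℝ | p ≤ (μ (Iic x)).toReal} := by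
  simp only [mem_setOf_eq, Iic_max_full hS hne, ENNReal.toReal_one]
  exact hp

lemma leftQuantile_mem [IsProbabilityMeasure μ] (hS : μ ((↑S : Set ℝ)ᶜ) = 0)
    (hne : S.Nonempty) {p : ℝ} (hp : p ∈ Ioc (0:ℝ) 1) : leftQuantile μ p ∈ S := by
  have hbdd : BddBelow {x : ℝ | p ≤ (μ (Iic x)).toReal} :=
    ⟨_, min_mem_lowerBounds hS hne hp.1⟩
  have hne' : (S.filter (fun s => p ≤ (μ (Iic s)).toReal)).Nonempty :=
    ⟨S.max' hne, Finset.mem_filter.mpr ⟨S.max'_mem hne, max_mem_T hS hne hp.2⟩⟩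
  obtain ⟨hs₀S, hs₀T⟩ := Finset.mem_filter.mp
    ((S.filter (fun s => p ≤ (μ (Iic s)).toReal)).min'_mem hne')
  have h1 : leftQuantile μ p = (S.filter (fun s => p ≤ (μ (Iic s)).toReal)).min' hne' := by
    apply le_antisymm
    · exact csInf_le hbdd hs₀T
    · refine le_csInf ⟨_, max_mem_T hS hne hp.2⟩ (fun x hx => ?_)
      have hne'' : (S.filter (fun s => s ≤ x)).Nonempty := by
        by_contra hemp
        rw [Finset.not_nonempty_iff_eq_empty] at hemp
        have h0 : μ (Iic x) = 0 := by
          refine measure_mono_null ?_ hS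
          intro y hy hyS
          have : y ∈ S.filter (fun s => s ≤ x) := Finset.mem_filter.mpr ⟨hyS, hy⟩
          simp [hemp] at this
        simp only [mem_setOf_eq, h0, ENNReal.toReal_zero] at hx
        exact absurd hx (not_le.mpr hp.1)
      obtain ⟨hs'S, hs'le⟩ := Finset.mem_filter.mp ((S.filter (fun s => s ≤ x)).max'_mem hne'')
      have hsub : Iic x ⊆ Iic ((S.filter (fun s => s ≤ x)).max' hne'') ∪ (↑S : Set ℝ)ᶜ := by
        intro y hy
        by_cases hyS : y ∈ (↑S : Set ℝ)
        · exact Or.inl ((S.filter (fun s => s ≤ x)).le_max' y (Finset.mem_filter.mpr ⟨hyS, hy⟩))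
        · exact Or.inr hyS
      have hle : μ (Iic x) ≤ μ (Iic ((S.filter (fun s => s ≤ x)).max' hne'')) := by
        calc μ (Iic x) ≤ μ (Iic _ ∪ (↑S : Set ℝ)ᶜ) := measure_mono hsub
        _ ≤ μ (Iic _) + μ ((↑S : Set ℝ)ᶜ) := measure_union_le _ _
        _ = μ (Iic _) := by rw [hS, add_zero]
      have hps' : p ≤ (μ (Iic ((S.filter (fun s => s ≤ x)).max' hne''))).toReal :=
        le_trans hx (ENNReal.toReal_mono (measure_ne_top _ _) hle)
      exact le_trans
        ((S.filter (fun s => p ≤ (μ (Iic s)).toReal)).min'_le _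
          (Finset.mem_filter.mpr ⟨hs'S, hps'⟩)) hs'le
  rw [h1]; exact hs₀S

lemma leftQuantile_monoOn [IsProbabilityMeasure μ] (hS : μ ((↑S : Set ℝ)ᶜ) = 0)
    (hne : S.Nonempty) : MonotoneOn (leftQuantile μ) (Ioc (0:ℝ) 1) := by
  intro p hp q hq hpq
  exact csInf_le_csInf ⟨_, min_mem_lowerBounds hS hne hp.1⟩
    ⟨_, max_mem_T hS hne hq.2⟩ (fun x hx => le_trans hpq hx)

end Quantile

section Closure

variable {μ : Measure ℝ} {S : Finset ℝ}

lemma concentration_mem (μ : Measure ℝ) [IsProbabilityMeasure μ] (S : Finset ℝ)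
    (hS : μ ((↑S : Set ℝ)ᶜ) = 0) (C : Set ℝ) (hC : C.OrdConnected) :
    IsProbabilityMeasure (concentration μ C) ∧
      ∃ S' : Finset ℝ, (concentration μ C) ((↑S' : Set ℝ)ᶜ) = 0 := by
  have hne : S.Nonempty := by
    rcases S.eq_empty_or_nonempty with h | h
    · exfalso
      rw [h] at hS
      simp at hS
    · exact h
  set a : ℝ := (∫ t in C, leftQuantile μ t) / (volume C).toReal with ha
  set h : ℝ → ℝ := fun u => if 0 < u then leftQuantile μ (min u 1) else S.min' hne - 1 with hh
  have hmem : ∀ u : ℝ, 0 < u → leftQuantile μ (min u 1) ∈ S := by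
    intro u hu
    exact leftQuantile_mem hS hne ⟨lt_min hu one_pos, min_le_right _ _⟩
  have hmono : Monotone h := by
    intro u v huv
    simp only [hh]
    by_cases hu : 0 < u
    · rw [if_pos hu, if_pos (lt_of_lt_of_le hu huv)]
      exact leftQuantile_monoOn hS hne ⟨lt_min hu one_pos, min_le_right _ _⟩
        ⟨lt_min (lt_of_lt_of_le hu huv) one_pos, min_le_right _ _⟩
        (min_le_min huv le_rfl)
    · rw [if_neg hu]
      by_cases hv : 0 < v
      · rw [if_pos hv]
        have := S.min'_le _ (hmem v hv)
        linarith
      · rw [if_neg hv]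
  set g : ℝ → ℝ := fun u => if u ∈ C then a else h u with hg
  have hgmeas : Measurable g := Measurable.ite hC.measurableSet measurable_const hmono.measurable
  have haeeq : (fun u => if u ∈ C then (∫ t in C, leftQuantile μ t) / (volume C).toReal
      else leftQuantile μ u) =ᵐ[unif01] g := by
    have hnull : unif01 ((Ioc (0:ℝ) 1)ᶜ) = 0 := by
      rw [unif01, Measure.restrict_apply (measurableSet_Ioc.compl)]
      have : (Ioc (0:ℝ) 1)ᶜ ∩ Icc 0 1 = {0} := by
        ext x
        simp only [mem_inter_iff, mem_compl_iff, mem_Ioc, mem_Icc, mem_singleton_iff]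
        constructor
        · rintro ⟨hn, h0, h1⟩
          push_neg at hn
          by_contra hx0
          have hx : 0 < x := lt_of_le_of_ne h0 (Ne.symm hx0)
          linarith [hn hx]
        · rintro rfl
          exact ⟨fun h => absurd h.1 (lt_irrefl 0), le_refl 0, zero_le_one⟩
      rw [this]
      exact measure_singleton 0
    refine (ae_iff.mpr (measure_mono_null ?_ hnull))
    intro u hu
    simp only [mem_setOf_eq, mem_compl_iff, mem_Ioc] at hu ⊢
    intro huIoc
    apply hu
    simp only [hg, hh]
    by_cases huC : u ∈ C
    · rw [if_pos huC, if_pos huC]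
    · rw [if_neg huC, if_neg huC, if_pos huIoc.1, min_eq_left huIoc.2]
  have hconc : concentration μ C = Measure.map g unif01 := by
    rw [concentration]
    exact Measure.map_congr haeeq
  constructor
  · rw [hconc]
    exact Measure.isProbabilityMeasure_map hgmeas.aemeasurable
  · refine ⟨insert a (insert (S.min' hne - 1) S), ?_⟩
    rw [hconc, Measure.map_apply hgmeas ((Finset.measurableSet _).compl)]
    have : g ⁻¹' ((↑(insert a (insert (S.min' hne - 1) S)) : Set ℝ)ᶜ) = ∅ := by
      ext u
      simp only [mem_preimage, mem_compl_iff, Finset.coe_insert, mem_insert_iff,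
        Finset.mem_coe, mem_empty_iff_false, iff_false, not_not]
      simp only [hg, hh]
      by_cases huC : u ∈ C
      · rw [if_pos huC]; exact Or.inl rfl
      · rw [if_neg huC]
        by_cases hu : 0 < u
        · rw [if_pos hu]
          exact Or.inr (Or.inr (hmem u hu))
        · rw [if_neg hu]
          exact Or.inr (Or.inl rfl)
    rw [this]
    simp

end Closure

section CondExpPart

lemma A_meas : MeasurableSet {p : ℝ × ℝ | p.2 < p.1} :=
  measurableSet_lt measurable_snd measurable_fst

lemma Y_meas : Measurable ({p : ℝ × ℝ | p.2 < p.1}.indicator (fun _ => (1:ℝ))) :=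
  measurable_const.indicator A_meas

lemma map_fst_P2 : Measure.map Prod.fst (unif01.prod unif01) = unif01 := by
  rw [Measure.map_fst_prod, measure_univ, one_smul]

lemma ae_Icc : ∀ᵐ x ∂unif01, x ∈ Icc (0:ℝ) 1 := by
  rw [unif01]; exact ae_restrict_mem measurableSet_Icc

lemma integrable_id_unif01 : Integrable (fun x : ℝ => x) unif01 := by
  refine Integrable.mono' (integrable_const 1) measurable_id.aestronglyMeasurable ?_
  filter_upwards [ae_Icc] with x hx
  rw [Real.norm_eq_abs, abs_le]
  exact ⟨by linarith [hx.1], hx.2⟩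

lemma integrable_fst_P2 : Integrable (fun p : ℝ × ℝ => p.1) (unif01.prod unif01) := by
  have h1 : Integrable (fun x : ℝ => x) (Measure.map Prod.fst (unif01.prod unif01)) := by
    rw [map_fst_P2]; exact integrable_id_unif01
  exact (integrable_map_measure measurable_id.aestronglyMeasurable
    measurable_fst.aemeasurable).mp h1

lemma unif01_Iio (x : ℝ) (hx : x ∈ Icc (0:ℝ) 1) : unif01 (Iio x) = ENNReal.ofReal x := by
  rw [unif01, Measure.restrict_apply measurableSet_Iio]
  have : Iio x ∩ Icc 0 1 = Ico 0 x := by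
    ext y
    simp only [mem_inter_iff, mem_Iio, mem_Icc, mem_Ico]
    constructor
    · rintro ⟨h1, h2, _⟩; exact ⟨h2, h1⟩
    · rintro ⟨h1, h2⟩; exact ⟨h2, h1, le_of_lt (lt_of_lt_of_le h2 hx.2)⟩
  rw [this, Real.volume_Ico, sub_zero]

lemma key_integral (s : Set ℝ) (hs : MeasurableSet s) :
    ∫ x in Prod.fst ⁻¹' s, (fun p : ℝ × ℝ => p.1) x ∂(unif01.prod unif01)
      = ∫ x in Prod.fst ⁻¹' s,
          ({p : ℝ × ℝ | p.2 < p.1}.indicator (fun _ => (1:ℝ))) x ∂(unif01.prod unif01) := by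
  have hE : MeasurableSet (Prod.fst ⁻¹' s ∩ {p : ℝ × ℝ | p.2 < p.1}) :=
    (measurable_fst hs).inter A_meas
  have hprod : (unif01.prod unif01) (Prod.fst ⁻¹' s ∩ {p : ℝ × ℝ | p.2 < p.1})
      = ∫⁻ x in s, ENNReal.ofReal x ∂unif01 := by
    rw [Measure.prod_apply hE]
    have h1 : ∀ᵐ x ∂unif01,
        unif01 (Prod.mk x ⁻¹' (Prod.fst ⁻¹' s ∩ {p : ℝ × ℝ | p.2 < p.1}))
          = s.indicator (fun x => ENNReal.ofReal x) x := by
      filter_upwards [ae_Icc] with x hx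
      have hpre : Prod.mk x ⁻¹' (Prod.fst ⁻¹' s ∩ {p : ℝ × ℝ | p.2 < p.1})
          = if x ∈ s then Iio x else ∅ := by
        ext y
        simp only [mem_preimage, mem_inter_iff, mem_setOf_eq]
        by_cases hxs : x ∈ s
        · simp [hxs]
        · simp [hxs]
      rw [hpre]
      by_cases hxs : x ∈ s
      · rw [if_pos hxs, indicator_of_mem hxs, unif01_Iio x hx]
      · rw [if_neg hxs, indicator_of_notMem hxs, measure_empty]
    rw [lintegral_congr_ae h1, lintegral_indicator hs _]
  have hR : ∫ x in Prod.fst ⁻¹' s,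
      ({p : ℝ × ℝ | p.2 < p.1}.indicator (fun _ => (1:ℝ))) x ∂(unif01.prod unif01)
      = (∫⁻ x in s, ENNReal.ofReal x ∂unif01).toReal := by
    rw [setIntegral_indicator A_meas, setIntegral_const, smul_eq_mul, mul_one, measureReal_def, hprod]
  have hL : ∫ x in s, (fun y : ℝ => y) x ∂(Measure.map Prod.fst (unif01.prod unif01))
      = ∫ x in Prod.fst ⁻¹' s, (fun p : ℝ × ℝ => p.1) x ∂(unif01.prod unif01) :=
    setIntegral_map hs measurable_id.aestronglyMeasurable measurable_fst.aemeasurable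
  rw [map_fst_P2] at hL
  have hnn : 0 ≤ᵐ[unif01.restrict s] (fun x : ℝ => x) := by
    filter_upwards [ae_restrict_of_ae ae_Icc] with x hx
    exact hx.1
  have hLR : ∫ x in s, x ∂unif01 = (∫⁻ x in s, ENNReal.ofReal x ∂unif01).toReal :=
    integral_eq_lintegral_of_nonneg_ae hnn measurable_id.aestronglyMeasurable
  rw [← hL, hLR, hR]

lemma fst_meas_comap :
    Measurable[MeasurableSpace.comap Prod.fst Real.measurableSpace]
      (fun p : ℝ × ℝ => p.1) :=
  fun t ht => ⟨t, ht, rfl⟩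

lemma condexp_eq_fst :
    (fun p : ℝ × ℝ => p.1) =ᵐ[unif01.prod unif01]
      MeasureTheory.condExp (MeasurableSpace.comap Prod.fst Real.measurableSpace)
        (unif01.prod unif01) ({p : ℝ × ℝ | p.2 < p.1}.indicator (fun _ => (1:ℝ))) := by
  have hm : MeasurableSpace.comap Prod.fst Real.measurableSpace
      ≤ (inferInstance : MeasurableSpace (ℝ × ℝ)) := measurable_fst.comap_le
  refine ae_eq_condExp_of_forall_setIntegral_eq hm ?_ ?_ ?_ ?_
  · refine Integrable.mono' (integrable_const 1) Y_meas.aestronglyMeasurable (ae_of_all _ ?_)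
    intro p
    rw [Real.norm_eq_abs]
    by_cases hp : p ∈ {q : ℝ × ℝ | q.2 < q.1}
    · rw [indicator_of_mem hp]; norm_num
    · rw [indicator_of_notMem hp]; norm_num
  · intro t _ _
    exact integrable_fst_P2.integrableOn
  · rintro t ⟨u, hu, rfl⟩ _
    exact (key_integral u hu)
  · exact (fst_meas_comap.stronglyMeasurable).aestronglyMeasurable

end CondExpPart

lemma S_nonempty_of (μ : Measure ℝ) [IsProbabilityMeasure μ] (S : Finset ℝ)
    (hS : μ ((↑S : Set ℝ)ᶜ) = 0) : S.Nonempty := by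
  rcases S.eq_empty_or_nonempty with h | h
  · exfalso; rw [h] at hS; simp at hS
  · exact h

/-- there is a set of distributions (of integrable random variables) closed
under concentration but not closed under conditional expectation. -/
theorem exists_closedUnderConcentration_not_closedUnderCondExp :
    ∃ M : Set (Measure ℝ),
      (∀ μ ∈ M, IsProbabilityMeasure μ ∧ Integrable id μ) ∧
      ClosedUnderConcentration M ∧ ¬ ClosedUnderCondExp M := by
  refine ⟨{μ | IsProbabilityMeasure μ ∧ ∃ S : Finset ℝ, μ ((↑S : Set ℝ)ᶜ) = 0}, ?_, ?_, ?_⟩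
  · rintro μ ⟨hprob, S, hS⟩
    haveI := hprob
    refine ⟨hprob, ?_⟩
    have hne : S.Nonempty := S_nonempty_of μ S hS
    refine Integrable.mono' (integrable_const ((S.image fun x => |x|).max' (hne.image _)))
      measurable_id.aestronglyMeasurable ?_
    have hae : ∀ᵐ x ∂μ, x ∈ (↑S : Set ℝ) := by
      rw [ae_iff]
      convert hS using 2; rfl
    filter_upwards [hae] with x hx
    rw [id_eq, Real.norm_eq_abs]
    exact (S.image fun y => |y|).le_max' |x| (Finset.mem_image_of_mem _ hx)
  · rintro μ ⟨hprob, S, hS⟩ C hCord _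
    haveI := hprob
    obtain ⟨h1, S', h2⟩ := concentration_mem μ S hS C hCord
    exact ⟨h1, S', h2⟩
  · intro hcl
    haveI : IsProbabilityMeasure (unif01.prod unif01) := by infer_instance
    have hYmem : Measure.map ({p : ℝ × ℝ | p.2 < p.1}.indicator (fun _ => (1:ℝ)))
        (unif01.prod unif01) ∈
        {μ : Measure ℝ | IsProbabilityMeasure μ ∧ ∃ S : Finset ℝ, μ ((↑S : Set ℝ)ᶜ) = 0} := by
      refine ⟨Measure.isProbabilityMeasure_map Y_meas.aemeasurable, ({0, 1} : Finset ℝ), ?_⟩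
      rw [Measure.map_apply Y_meas ((Finset.measurableSet _).compl)]
      have : ({p : ℝ × ℝ | p.2 < p.1}.indicator (fun _ => (1:ℝ))) ⁻¹'
          ((↑({0, 1} : Finset ℝ) : Set ℝ)ᶜ) = ∅ := by
        ext p
        simp only [mem_preimage, mem_compl_iff, Finset.coe_insert, Finset.coe_singleton,
          mem_insert_iff, mem_singleton_iff, mem_empty_iff_false, iff_false, not_not]
        by_cases hp : p ∈ {q : ℝ × ℝ | q.2 < q.1}
        · rw [indicator_of_mem hp]; exact Or.inr rfl
        · rw [indicator_of_notMem hp]; exact Or.inl rfl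
      rw [this]; simp
    have hYint : Integrable ({p : ℝ × ℝ | p.2 < p.1}.indicator (fun _ => (1:ℝ)))
        (unif01.prod unif01) := by
      refine Integrable.mono' (integrable_const 1) Y_meas.aestronglyMeasurable (ae_of_all _ ?_)
      intro p
      rw [Real.norm_eq_abs]
      by_cases hp : p ∈ {q : ℝ × ℝ | q.2 < q.1}
      · rw [indicator_of_mem hp]; norm_num
      · rw [indicator_of_notMem hp]; norm_num
    have hfinal := hcl (ℝ × ℝ) (unif01.prod unif01) inferInstance
      ({p : ℝ × ℝ | p.2 < p.1}.indicator (fun _ => (1:ℝ))) Y_meas hYint hYmem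
      (MeasurableSpace.comap Prod.fst Real.measurableSpace) measurable_fst.comap_le
    rw [← Measure.map_congr condexp_eq_fst, map_fst_P2] at hfinal
    obtain ⟨_, S, hS⟩ := hfinal
    have h1 : volume ((↑S : Set ℝ)) = 0 := S.countable_toSet.measure_zero _
    have h2 : unif01 ((↑S : Set ℝ)ᶜ) ≥ 1 := by
      have hsub : Icc (0:ℝ) 1 ⊆ ((↑S : Set ℝ)ᶜ ∩ Icc 0 1) ∪ (↑S : Set ℝ) := by
        intro x hx
        by_cases hxS : x ∈ (↑S : Set ℝ)
        · exact Or.inr hxS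
        · exact Or.inl ⟨hxS, hx⟩
      have := measure_mono (μ := volume) hsub
      have hle := le_trans this (measure_union_le _ _)
      rw [Real.volume_Icc, h1, add_zero] at hle
      rw [unif01, Measure.restrict_apply (MeasurableSet.compl (Finset.measurableSet _))]
      calc (1:ENNReal) = ENNReal.ofReal (1 - 0) := by norm_num
      _ ≤ volume ((↑S : Set ℝ)ᶜ ∩ Icc 0 1) := hle
    rw [hS] at h2
    simp at h2
end

section
/- Let h: [0,1] → ℝ be a function of bounded variation with h(0) = 0, and let ĥ be its upper semicontinuous modification (ĥ(t) = max{h(t⁻), h(t), h(t⁺)} at interior discontinuity points, ĥ = h elsewhere). Then the concave envelopes satisfy h* = (ĥ)* on [0,1]. -/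
open MeasureTheory Set Classical

/-- The concave envelope of `h` on `[0,1]`: pointwise infimum of all concave functions `g`
on `[0,1]` with `g 0 = 0` dominating `h`. -/
noncomputable def concaveEnvelope (h : ℝ → ℝ) : ℝ → ℝ := fun t =>
  sInf {y : ℝ | ∃ g : ℝ → ℝ, ConcaveOn ℝ (Icc 0 1) g ∧ g 0 = 0 ∧
      (∀ s ∈ Icc (0:ℝ) 1, h s ≤ g s) ∧ y = g t}

/-- The convex envelope of `h` on `[0,1]`: pointwise supremum of all convex functions `g`
on `[0,1]` with `g 0 = 0` dominated by `h`. -/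
noncomputable def convexEnvelope (h : ℝ → ℝ) : ℝ → ℝ := fun t =>
  sSup {y : ℝ | ∃ g : ℝ → ℝ, ConvexOn ℝ (Icc 0 1) g ∧ g 0 = 0 ∧
      (∀ s ∈ Icc (0:ℝ) 1, g s ≤ h s) ∧ y = g t}

/-- The upper semicontinuous modification `ĥ` of `h`: at interior points, the maximum of
`h(t⁻)`, `h(t⁺)` and `h(t)`; no modification at `0` and `1`. -/
noncomputable def uscMod (h : ℝ → ℝ) : ℝ → ℝ := fun t =>
  if t ∈ Ioo (0:ℝ) 1 then max (max (Function.leftLim h t) (Function.rightLim h t)) (h t)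
  else h t

open Filter Topology

lemma leftLim_eq_of_not_exists' {α β : Type*} [LinearOrder α] [TopologicalSpace β]
    [hα : TopologicalSpace α] [h'α : OrderTopology α] (f : α → β) {a : α}
    (h : ¬∃ y, Tendsto f (𝓝[<] a) (𝓝 y)) : Function.leftLim f a = f a := by
  rw [h'α.topology_eq_generate_intervals] at h
  simp [Function.leftLim, h]

lemma rightLim_eq_of_not_exists' {α β : Type*} [LinearOrder α] [TopologicalSpace β]
    [TopologicalSpace α] [OrderTopology α] (f : α → β) {a : α}
    (h : ¬∃ y, Tendsto f (𝓝[>] a) (𝓝 y)) : Function.rightLim f a = f a :=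
  leftLim_eq_of_not_exists' (α := αᵒᵈ) f h

lemma uscMod_le_of_concave {h g : ℝ → ℝ} (hg : ConcaveOn ℝ (Icc 0 1) g)
    (hle : ∀ s ∈ Icc (0:ℝ) 1, h s ≤ g s) : ∀ s ∈ Icc (0:ℝ) 1, uscMod h s ≤ g s := by
  intro s hs
  unfold uscMod
  split_ifs with hmem
  · have hcont : ContinuousWithinAt g (Ioo 0 1) s := by
      have := hg.continuousOn_interior
      rw [interior_Icc] at this
      exact this s hmem
    have hIoo : Ioo (0:ℝ) 1 ∈ 𝓝 s := isOpen_Ioo.mem_nhds hmem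
    have hgs : h s ≤ g s := hle s hs
    have hleft : Function.leftLim h s ≤ g s := by
      by_cases H : ∃ y, Tendsto h (𝓝[<] s) (𝓝 y)
      · obtain ⟨y, hy⟩ := H
        haveI : (𝓝[<] s).NeBot := inferInstance
        have hne : 𝓝[<] s ≠ ⊥ := this.ne'
        rw [leftLim_eq_of_tendsto hy]
        have hgl : Tendsto g (𝓝[<] s) (𝓝 (g s)) :=
          hcont.tendsto.mono_left (nhdsWithin_le_of_mem (mem_nhdsWithin_of_mem_nhds hIoo))
        refine le_of_tendsto_of_tendsto hy hgl ?_
        filter_upwards [mem_nhdsWithin_of_mem_nhds hIoo] with x hx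
          using hle x (Ioo_subset_Icc_self hx)
      · rw [leftLim_eq_of_not_exists' h H]; exact hgs
    have hright : Function.rightLim h s ≤ g s := by
      by_cases H : ∃ y, Tendsto h (𝓝[>] s) (𝓝 y)
      · obtain ⟨y, hy⟩ := H
        haveI : (𝓝[>] s).NeBot := inferInstance
        have hne : 𝓝[>] s ≠ ⊥ := this.ne'
        rw [rightLim_eq_of_tendsto hy]
        have hgl : Tendsto g (𝓝[>] s) (𝓝 (g s)) :=
          hcont.tendsto.mono_left (nhdsWithin_le_of_mem (mem_nhdsWithin_of_mem_nhds hIoo))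
        refine le_of_tendsto_of_tendsto hy hgl ?_
        filter_upwards [mem_nhdsWithin_of_mem_nhds hIoo] with x hx
          using hle x (Ioo_subset_Icc_self hx)
      · rw [rightLim_eq_of_not_exists' h H]; exact hgs
    exact max_le (max_le hleft hright) hgs
  · exact hle s hs

lemma le_uscMod (h : ℝ → ℝ) (s : ℝ) : h s ≤ uscMod h s := by
  unfold uscMod
  split_ifs with hmem
  · exact le_max_right _ _
  · exact le_rfl

/-- the concave envelopes of `h` and of its upper semicontinuous
modification `ĥ` coincide on `[0,1]`. -/
theorem concaveEnvelope_uscMod (h : ℝ → ℝ) (hbv : BoundedVariationOn h (Icc 0 1))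
    (h0 : h 0 = 0) :
    ∀ t ∈ Icc (0:ℝ) 1, concaveEnvelope h t = concaveEnvelope (uscMod h) t := by
  intro t _
  unfold concaveEnvelope
  congr 1
  ext y
  constructor
  · rintro ⟨g, hg, hg0, hdom, rfl⟩
    exact ⟨g, hg, hg0, uscMod_le_of_concave hg hdom, rfl⟩
  · rintro ⟨g, hg, hg0, hdom, rfl⟩
    exact ⟨g, hg, hg0, fun s hs => (le_uscMod h s).trans (hdom s hs), rfl⟩
end

section
/- Let h: [0,1] → ℝ be of bounded variation with h(0)=0, ĥ its upper semicontinuous modification, and h* the concave envelope of h. Then the set {t ∈ [0,1] : ĥ(t) ≠ h*(t)} is a union of disjoint open intervals, and h* is linear (affine) on each such interval. -/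
open MeasureTheory Set Classical

namespace Thm9

/-- admissible majorants -/
def Adm (h g : ℝ → ℝ) : Prop :=
  ConcaveOn ℝ (Icc 0 1) g ∧ g 0 = 0 ∧ ∀ s ∈ Icc (0:ℝ) 1, h s ≤ g s

lemma mem_valueSet {h g : ℝ → ℝ} (hg : Adm h g) (t : ℝ) :
    g t ∈ {y : ℝ | ∃ g : ℝ → ℝ, ConcaveOn ℝ (Icc 0 1) g ∧ g 0 = 0 ∧
      (∀ s ∈ Icc (0:ℝ) 1, h s ≤ g s) ∧ y = g t} :=
  ⟨g, hg.1, hg.2.1, hg.2.2, rfl⟩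

lemma exists_adm (h : ℝ → ℝ) (hbv : BoundedVariationOn h (Icc 0 1)) (h0 : h 0 = 0) :
    ∃ g, Adm h g := by
  set M : ℝ := max (eVariationOn h (Icc 0 1)).toReal 0 with hM
  have hMnon : 0 ≤ M := le_max_right _ _
  have hbound : ∀ s ∈ Icc (0:ℝ) 1, h s ≤ M := by
    intro s hs
    have := hbv.sub_le hs (Set.left_mem_Icc.2 zero_le_one)
    rw [h0] at this
    simp only [sub_zero] at this
    exact this.trans (le_max_left _ _)
  refine ⟨fun t => if t = 0 then 0 else M, ⟨convex_Icc 0 1, ?_⟩, by simp, ?_⟩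
  · intro x hx y hy a b ha hb hab
    simp only [smul_eq_mul]
    by_cases hc : a * x + b * y = 0
    · rw [if_pos hc]
      have hax : a * x = 0 := by
        have h1 : 0 ≤ a * x := mul_nonneg ha hx.1
        have h2 : 0 ≤ b * y := mul_nonneg hb hy.1
        linarith
      have hby : b * y = 0 := by
        have h1 : 0 ≤ a * x := mul_nonneg ha hx.1
        linarith
      have e1 : a * (if x = 0 then (0:ℝ) else M) = 0 := by
        rcases mul_eq_zero.1 hax with h' | h'
        · rw [h', zero_mul]
        · simp [h']
      have e2 : b * (if y = 0 then (0:ℝ) else M) = 0 := by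
        rcases mul_eq_zero.1 hby with h' | h'
        · rw [h', zero_mul]
        · simp [h']
      rw [e1, e2]; norm_num
    · rw [if_neg hc]
      have e1 : (if x = 0 then (0:ℝ) else M) ≤ M := by split <;> simp [hMnon]
      have e2 : (if y = 0 then (0:ℝ) else M) ≤ M := by split <;> simp [hMnon]
      calc a * (if x = 0 then (0:ℝ) else M) + b * (if y = 0 then (0:ℝ) else M)
          ≤ a * M + b * M := by
            gcongr
        _ = M := by rw [← add_mul, hab, one_mul]
  · intro s hs
    by_cases h' : s = 0
    · simp [h', h0]
    · simp only [if_neg h']; exact hbound s hs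

variable {h : ℝ → ℝ}

lemma valueSet_nonempty (hbv : BoundedVariationOn h (Icc 0 1)) (h0 : h 0 = 0) (t : ℝ) :
    {y : ℝ | ∃ g : ℝ → ℝ, ConcaveOn ℝ (Icc 0 1) g ∧ g 0 = 0 ∧
      (∀ s ∈ Icc (0:ℝ) 1, h s ≤ g s) ∧ y = g t}.Nonempty := by
  obtain ⟨g, hg⟩ := exists_adm h hbv h0
  exact ⟨g t, mem_valueSet hg t⟩

lemma valueSet_bddBelow {t : ℝ} (ht : t ∈ Icc (0:ℝ) 1) :
    BddBelow {y : ℝ | ∃ g : ℝ → ℝ, ConcaveOn ℝ (Icc 0 1) g ∧ g 0 = 0 ∧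
      (∀ s ∈ Icc (0:ℝ) 1, h s ≤ g s) ∧ y = g t} := by
  refine ⟨h t, ?_⟩
  rintro y ⟨g, _, _, hdom, rfl⟩
  exact hdom t ht

lemma env_le {g : ℝ → ℝ} (hg : Adm h g) {t : ℝ} (ht : t ∈ Icc (0:ℝ) 1) :
    concaveEnvelope h t ≤ g t :=
  csInf_le (valueSet_bddBelow ht) (mem_valueSet hg t)

lemma le_env (hbv : BoundedVariationOn h (Icc 0 1)) (h0 : h 0 = 0)
    {t : ℝ} (ht : t ∈ Icc (0:ℝ) 1) : h t ≤ concaveEnvelope h t := by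
  apply le_csInf (valueSet_nonempty hbv h0 t)
  rintro y ⟨g, _, _, hdom, rfl⟩
  exact hdom t ht

lemma env_concave (hbv : BoundedVariationOn h (Icc 0 1)) (h0 : h 0 = 0) :
    ConcaveOn ℝ (Icc 0 1) (concaveEnvelope h) := by
  refine ⟨convex_Icc 0 1, fun x hx y hy a b ha hb hab => ?_⟩
  have hxy : a • x + b • y ∈ Icc (0:ℝ) 1 := (convex_Icc 0 1) hx hy ha hb hab
  apply le_csInf (valueSet_nonempty hbv h0 _)
  rintro v ⟨g, hgc, hg0, hdom, rfl⟩
  have hg : Adm h g := ⟨hgc, hg0, hdom⟩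
  calc a • concaveEnvelope h x + b • concaveEnvelope h y
      ≤ a • g x + b • g y := by
        simp only [smul_eq_mul]
        gcongr
        · exact env_le hg hx
        · exact env_le hg hy
    _ ≤ g (a • x + b • y) := hgc.2 hx hy ha hb hab

lemma env_zero (hbv : BoundedVariationOn h (Icc 0 1)) (h0 : h 0 = 0) :
    concaveEnvelope h 0 = 0 := by
  obtain ⟨g, hg⟩ := exists_adm h hbv h0
  have h1 : concaveEnvelope h 0 ≤ 0 := by
    have := env_le hg (Set.left_mem_Icc.2 zero_le_one)
    rwa [hg.2.1] at this
  have h2 : (0:ℝ) ≤ concaveEnvelope h 0 := by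
    have := le_env hbv h0 (Set.left_mem_Icc.2 zero_le_one)
    rwa [h0] at this
  linarith

lemma env_one (hbv : BoundedVariationOn h (Icc 0 1)) (h0 : h 0 = 0) :
    concaveEnvelope h 1 = h 1 := by
  have henvc := env_concave hbv h0
  have h1m : (1:ℝ) ∈ Icc (0:ℝ) 1 := Set.right_mem_Icc.2 zero_le_one
  set φ := concaveEnvelope h with hφ
  have hle : ∀ s ∈ Icc (0:ℝ) 1, (if s = 1 then h 1 else φ s) ≤ φ s := by
    intro s hs
    split
    · next h' => subst h'; exact le_env hbv h0 h1m
    · exact le_refl _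
  have hadm : Adm h (fun t => if t = 1 then h 1 else φ t) := by
    refine ⟨⟨convex_Icc 0 1, ?_⟩, ?_, ?_⟩
    · intro x hx y hy a b ha hb hab
      simp only [smul_eq_mul]
      by_cases hc : a * x + b * y = 1
      · rw [if_pos hc]
        have hx1 : a * (1 - x) = 0 := by
          have h1 : 0 ≤ a * (1 - x) := mul_nonneg ha (by linarith [hx.2])
          have h2 : 0 ≤ b * (1 - y) := mul_nonneg hb (by linarith [hy.2])
          nlinarith
        have hy1 : b * (1 - y) = 0 := by
          have h1 : 0 ≤ a * (1 - x) := mul_nonneg ha (by linarith [hx.2])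
          nlinarith
        rcases mul_eq_zero.1 hx1 with h' | h'
        · -- a = 0, so b = 1, y = 1
          have hb1 : b = 1 := by linarith
          have hy' : y = 1 := by
            rcases mul_eq_zero.1 hy1 with h'' | h''
            · linarith
            · linarith
          rw [h', hb1, hy', if_pos rfl]; ring_nf; exact le_refl _
        · have hx' : x = 1 := by linarith
          rcases mul_eq_zero.1 hy1 with h'' | h''
          · have ha1 : a = 1 := by linarith
            rw [h'', ha1, hx', if_pos rfl]; ring_nf; exact le_refl _
          · have hy' : y = 1 := by linarith
            subst hx'; subst hy'
            norm_num
            rw [← add_mul, hab, one_mul]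
      · rw [if_neg hc]
        calc a * (if x = 1 then h 1 else φ x) + b * (if y = 1 then h 1 else φ y)
            ≤ a * φ x + b * φ y := by gcongr <;> [exact hle x hx; exact hle y hy]
          _ ≤ φ (a * x + b * y) := by
              have := henvc.2 hx hy ha hb hab
              simpa [smul_eq_mul] using this
    · show (if (0:ℝ) = 1 then h 1 else φ 0) = 0
      rw [if_neg (by norm_num : (0:ℝ) ≠ 1)]
      exact env_zero hbv h0
    · intro s hs
      show h s ≤ if s = 1 then h 1 else φ s
      by_cases h' : s = 1
      · rw [if_pos h', h']
      · rw [if_neg h']; exact le_env hbv h0 hs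
  have h2 : φ 1 ≤ h 1 := by
    have := env_le hadm h1m
    simpa using this
  exact le_antisymm h2 (le_env hbv h0 h1m)

/-- left/right limits of a BV function exist at interior points -/
lemma tendsto_limits (hbv : BoundedVariationOn h (Icc 0 1)) :
    ∀ t ∈ Ioo (0:ℝ) 1,
      Filter.Tendsto h (nhdsWithin t (Iio t)) (nhds (Function.leftLim h t)) ∧
      Filter.Tendsto h (nhdsWithin t (Ioi t)) (nhds (Function.rightLim h t)) := by
  obtain ⟨p, q, hp, hq, hpq⟩ :=
    (hbv.locallyBoundedVariationOn).exists_monotoneOn_sub_monotoneOn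
  have hbddp : BddBelow (p '' Icc 0 1) ∧ BddAbove (p '' Icc 0 1) := by
    constructor
    · refine ⟨p 0, ?_⟩
      rintro y ⟨u, hu, rfl⟩
      exact hp (Set.left_mem_Icc.2 zero_le_one) hu hu.1
    · refine ⟨p 1, ?_⟩
      rintro y ⟨u, hu, rfl⟩
      exact hp hu (Set.right_mem_Icc.2 zero_le_one) hu.2
  have hbddq : BddBelow (q '' Icc 0 1) ∧ BddAbove (q '' Icc 0 1) := by
    constructor
    · refine ⟨q 0, ?_⟩
      rintro y ⟨u, hu, rfl⟩
      exact hq (Set.left_mem_Icc.2 zero_le_one) hu hu.1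
    · refine ⟨q 1, ?_⟩
      rintro y ⟨u, hu, rfl⟩
      exact hq hu (Set.right_mem_Icc.2 zero_le_one) hu.2
  obtain ⟨p', hp', hpp'⟩ := hp.exists_monotone_extension hbddp.1 hbddp.2
  obtain ⟨q', hq', hqq'⟩ := hq.exists_monotone_extension hbddq.1 hbddq.2
  intro t ht
  have heq : ∀ u ∈ Icc (0:ℝ) 1, h u = p' u - q' u := by
    intro u hu
    have : h u = p u - q u := by rw [hpq]; rfl
    rw [this, hpp' hu, hqq' hu]
  constructor
  · have htd : Filter.Tendsto (fun u => p' u - q' u) (nhdsWithin t (Iio t))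
        (nhds (Function.leftLim p' t - Function.leftLim q' t)) :=
      (hp'.tendsto_leftLim t).sub (hq'.tendsto_leftLim t)
    have hev : ∀ᶠ u in nhdsWithin t (Iio t), h u = p' u - q' u := by
      filter_upwards [Ioo_mem_nhdsLT_of_mem (⟨ht.1, le_refl t⟩ : t ∈ Ioc 0 t)] with u hu
      exact heq u ⟨hu.1.le, hu.2.le.trans ht.2.le⟩
    have htd' : Filter.Tendsto h (nhdsWithin t (Iio t))
        (nhds (Function.leftLim p' t - Function.leftLim q' t)) :=
      Filter.Tendsto.congr' (Filter.EventuallyEq.symm hev) htd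
    have := leftLim_eq_of_tendsto (f := h) (a := t)
      htd'
    rw [this]; exact htd'
  · have htd : Filter.Tendsto (fun u => p' u - q' u) (nhdsWithin t (Ioi t))
        (nhds (Function.rightLim p' t - Function.rightLim q' t)) :=
      (hp'.tendsto_rightLim t).sub (hq'.tendsto_rightLim t)
    have hev : ∀ᶠ u in nhdsWithin t (Ioi t), h u = p' u - q' u := by
      filter_upwards [Ioo_mem_nhdsGT_of_mem (⟨le_refl t, ht.2⟩ : t ∈ Ico t 1)] with u hu
      exact heq u ⟨ht.1.le.trans hu.1.le, hu.2.le⟩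
    have htd' : Filter.Tendsto h (nhdsWithin t (Ioi t))
        (nhds (Function.rightLim p' t - Function.rightLim q' t)) :=
      Filter.Tendsto.congr' (Filter.EventuallyEq.symm hev) htd
    have := rightLim_eq_of_tendsto (f := h) (a := t)
      htd'
    rw [this]; exact htd'

lemma env_contOn (hbv : BoundedVariationOn h (Icc 0 1)) (h0 : h 0 = 0) :
    ContinuousOn (concaveEnvelope h) (Ioo 0 1) :=
  ((env_concave hbv h0).subset Ioo_subset_Icc_self (convex_Ioo 0 1)).continuousOn isOpen_Ioo

lemma uscMod_le_env (hbv : BoundedVariationOn h (Icc 0 1)) (h0 : h 0 = 0) :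
    ∀ t ∈ Icc (0:ℝ) 1, uscMod h t ≤ concaveEnvelope h t := by
  intro t ht
  by_cases hint : t ∈ Ioo (0:ℝ) 1
  · rw [uscMod, if_pos hint]
    have hcw : ContinuousWithinAt (concaveEnvelope h) (Ioo 0 1) t :=
      (env_contOn hbv h0) t hint
    have hlt : Filter.Tendsto (concaveEnvelope h) (nhdsWithin t (Iio t))
        (nhds (concaveEnvelope h t)) := by
      apply hcw.mono_left
      rw [← nhdsWithin_Ioo_eq_nhdsLT hint.1]
      exact nhdsWithin_mono t (fun u hu => ⟨hu.1, hu.2.trans hint.2⟩)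
    have hrt : Filter.Tendsto (concaveEnvelope h) (nhdsWithin t (Ioi t))
        (nhds (concaveEnvelope h t)) := by
      apply hcw.mono_left
      rw [← nhdsWithin_Ioo_eq_nhdsGT hint.2]
      exact nhdsWithin_mono t (fun u hu => ⟨hint.1.trans hu.1, hu.2⟩)
    have hev1 : ∀ᶠ u in nhdsWithin t (Iio t), h u ≤ concaveEnvelope h u := by
      filter_upwards [Ioo_mem_nhdsLT_of_mem (⟨hint.1, le_refl t⟩ : t ∈ Ioc 0 t)] with u hu
      exact le_env hbv h0 ⟨hu.1.le, hu.2.le.trans hint.2.le⟩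
    have hev2 : ∀ᶠ u in nhdsWithin t (Ioi t), h u ≤ concaveEnvelope h u := by
      filter_upwards [Ioo_mem_nhdsGT_of_mem (⟨le_refl t, hint.2⟩ : t ∈ Ico t 1)] with u hu
      exact le_env hbv h0 ⟨hint.1.le.trans hu.1.le, hu.2.le⟩
    have h1 : Function.leftLim h t ≤ concaveEnvelope h t :=
      le_of_tendsto_of_tendsto ((tendsto_limits hbv) t hint).1 hlt hev1
    have h2 : Function.rightLim h t ≤ concaveEnvelope h t :=
      le_of_tendsto_of_tendsto ((tendsto_limits hbv) t hint).2 hrt hev2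
    exact max_le (max_le h1 h2) (le_env hbv h0 ht)
  · rw [uscMod, if_neg hint]
    exact le_env hbv h0 ht

lemma h_le_uscMod (t : ℝ) : h t ≤ uscMod h t := by
  rw [uscMod]
  split
  · exact le_max_right _ _
  · exact le_refl _

/-- local upper bound for `uscMod` near interior points -/
lemma usc_bound (hbv : BoundedVariationOn h (Icc 0 1)) {t : ℝ} (ht : t ∈ Ioo (0:ℝ) 1)
    {ε : ℝ} (hε : 0 < ε) :
    ∃ δ > 0, Ioo (t - δ) (t + δ) ⊆ Ioo 0 1 ∧
      ∀ s ∈ Ioo (t - δ) (t + δ), uscMod h s < uscMod h t + ε := by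
  set l := Function.leftLim h t
  set r := Function.rightLim h t
  have hlred : l ≤ uscMod h t := by
    rw [uscMod, if_pos ht]; exact le_max_of_le_left (le_max_left _ _)
  have hrred : r ≤ uscMod h t := by
    rw [uscMod, if_pos ht]; exact le_max_of_le_left (le_max_right _ _)
  have hevl : ∀ᶠ u in nhdsWithin t (Iio t), h u < l + ε / 2 := by
    have := (tendsto_limits hbv t ht).1
    exact this.eventually (eventually_lt_nhds (by linarith))
  have hevr : ∀ᶠ u in nhdsWithin t (Ioi t), h u < r + ε / 2 := by
    have := (tendsto_limits hbv t ht).2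
    exact this.eventually (eventually_lt_nhds (by linarith))
  obtain ⟨a', ha', hsub1⟩ := mem_nhdsLT_iff_exists_Ioo_subset.1 hevl
  obtain ⟨b', hb', hsub2⟩ := mem_nhdsGT_iff_exists_Ioo_subset.1 hevr
  simp only [mem_Iio] at ha'
  simp only [mem_Ioi] at hb'
  refine ⟨min (min (t - a') (b' - t)) (min t (1 - t)), by
    simp only [lt_min_iff]
    exact ⟨⟨by linarith, by linarith⟩, ⟨ht.1, by linarith [ht.2]⟩⟩, ?_, ?_⟩
  · intro s hs
    simp only [mem_Ioo] at hs ⊢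
    constructor
    · have := hs.1
      have h1 : min (min (t - a') (b' - t)) (min t (1 - t)) ≤ t := (min_le_right _ _).trans (min_le_left _ _)
      linarith
    · have := hs.2
      have h1 : min (min (t - a') (b' - t)) (min t (1 - t)) ≤ 1 - t := (min_le_right _ _).trans (min_le_right _ _)
      linarith
  · intro s hs
    simp only [mem_Ioo] at hs
    have hδa : min (min (t - a') (b' - t)) (min t (1 - t)) ≤ t - a' :=
      (min_le_left _ _).trans (min_le_left _ _)
    have hδb : min (min (t - a') (b' - t)) (min t (1 - t)) ≤ b' - t :=
      (min_le_left _ _).trans (min_le_right _ _)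
    have hδt : min (min (t - a') (b' - t)) (min t (1 - t)) ≤ t :=
      (min_le_right _ _).trans (min_le_left _ _)
    have hδ1 : min (min (t - a') (b' - t)) (min t (1 - t)) ≤ 1 - t :=
      (min_le_right _ _).trans (min_le_right _ _)
    have hs01 : s ∈ Ioo (0:ℝ) 1 := ⟨by linarith [hs.1], by linarith [hs.2]⟩
    rcases lt_trichotomy s t with hst | hst | hst
    · -- s < t : all relevant values of h near s are < l + ε/2
      have hsa : a' < s := by linarith [hs.1]
      have hbnd : ∀ u ∈ Ioo a' t, h u < l + ε / 2 := fun u hu => hsub1 hu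
      have hh : h s < l + ε / 2 := hbnd s ⟨hsa, hst⟩
      have hll : Function.leftLim h s ≤ l + ε / 2 := by
        apply le_of_tendsto (tendsto_limits hbv s hs01).1
        filter_upwards [Ioo_mem_nhdsLT_of_mem (⟨hsa, le_refl s⟩ : s ∈ Ioc a' s)] with u hu
        exact (hbnd u ⟨hu.1, hu.2.trans hst⟩).le
      have hrl : Function.rightLim h s ≤ l + ε / 2 := by
        apply le_of_tendsto (tendsto_limits hbv s hs01).2
        filter_upwards [Ioo_mem_nhdsGT_of_mem (⟨le_refl s, hst⟩ : s ∈ Ico s t)] with u hu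
        exact (hbnd u ⟨hsa.trans hu.1, hu.2⟩).le
      rw [uscMod, if_pos hs01]
      have : max (max (Function.leftLim h s) (Function.rightLim h s)) (h s) ≤ l + ε / 2 :=
        max_le (max_le hll hrl) hh.le
      linarith [hlred]
    · subst hst; linarith [h_le_uscMod (h := h) s]
    · -- t < s
      have hsb : s < b' := by linarith [hs.2]
      have hbnd : ∀ u ∈ Ioo t b', h u < r + ε / 2 := fun u hu => hsub2 hu
      have hh : h s < r + ε / 2 := hbnd s ⟨hst, hsb⟩
      have hll : Function.leftLim h s ≤ r + ε / 2 := by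
        apply le_of_tendsto (tendsto_limits hbv s hs01).1
        filter_upwards [Ioo_mem_nhdsLT_of_mem (⟨hst, le_refl s⟩ : s ∈ Ioc t s)] with u hu
        exact (hbnd u ⟨hu.1, hu.2.trans hsb⟩).le
      have hrl : Function.rightLim h s ≤ r + ε / 2 := by
        apply le_of_tendsto (tendsto_limits hbv s hs01).2
        filter_upwards [Ioo_mem_nhdsGT_of_mem (⟨le_refl s, hsb⟩ : s ∈ Ico s b')] with u hu
        exact (hbnd u ⟨hst.trans hu.1, hu.2⟩).le
      rw [uscMod, if_pos hs01]
      have : max (max (Function.leftLim h s) (Function.rightLim h s)) (h s) ≤ r + ε / 2 :=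
        max_le (max_le hll hrl) hh.le
      linarith [hrred]

lemma concave_combo {φ : ℝ → ℝ} (hφ : ConcaveOn ℝ (Icc (0:ℝ) 1) φ)
    {u v w : ℝ} (hu : u ∈ Icc (0:ℝ) 1) (hv : v ∈ Icc (0:ℝ) 1) (huv : u < v)
    (hw : w ∈ Icc u v) :
    (v - w) * φ u + (w - u) * φ v ≤ (v - u) * φ w := by
  have h1 : (0:ℝ) < v - u := by linarith
  have hcombo : (v - w) / (v - u) * u + (w - u) / (v - u) * v = w := by
    field_simp; ring
  have h2 : (v - w) / (v - u) * φ u + (w - u) / (v - u) * φ v ≤ φ w := by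
    have h3 := hφ.2 hu hv
      (show (0:ℝ) ≤ (v - w) / (v - u) from div_nonneg (by linarith [hw.2]) h1.le)
      (show (0:ℝ) ≤ (w - u) / (v - u) from div_nonneg (by linarith [hw.1]) h1.le)
      (show (v - w) / (v - u) + (w - u) / (v - u) = 1 by
        rw [← add_div, div_eq_one_iff_eq h1.ne']; ring)
    simp only [smul_eq_mul, hcombo] at h3
    exact h3
  have h3 := mul_le_mul_of_nonneg_left h2 h1.le
  calc (v - w) * φ u + (w - u) * φ v
      = (v - u) * ((v - w) / (v - u) * φ u + (w - u) / (v - u) * φ v) := by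
        field_simp
    _ ≤ (v - u) * φ w := h3

lemma concave_line_inside {φ : ℝ → ℝ} (hφ : ConcaveOn ℝ (Icc (0:ℝ) 1) φ)
    {u v w : ℝ} (hu : u ∈ Icc (0:ℝ) 1) (hv : v ∈ Icc (0:ℝ) 1) (huv : u < v)
    (hw : w ∈ Icc u v) :
    φ u + (φ v - φ u) / (v - u) * (w - u) ≤ φ w := by
  have h1 : (0:ℝ) < v - u := by linarith
  have key := concave_combo hφ hu hv huv hw
  rw [show φ u + (φ v - φ u) / (v - u) * (w - u)
      = (φ u * (v - w) + φ v * (w - u)) / (v - u) by field_simp; ring,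
    div_le_iff₀ h1]
  nlinarith [key]

lemma concave_line_outside {φ : ℝ → ℝ} (hφ : ConcaveOn ℝ (Icc (0:ℝ) 1) φ)
    {u v s : ℝ} (hu : u ∈ Icc (0:ℝ) 1) (hv : v ∈ Icc (0:ℝ) 1) (huv : u < v)
    (hs : s ∈ Icc (0:ℝ) 1) (hout : s ∉ Ioo u v) :
    φ s ≤ φ u + (φ v - φ u) / (v - u) * (s - u) := by
  have h1 : (0:ℝ) < v - u := by linarith
  rw [show φ u + (φ v - φ u) / (v - u) * (s - u)
      = (φ u * (v - s) + φ v * (s - u)) / (v - u) by field_simp; ring,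
    le_div_iff₀ h1]
  rcases le_or_gt s u with hsu | hsu
  · -- s ≤ u, apply combo at w = u with endpoints s, v
    rcases eq_or_lt_of_le hsu with rfl | hsu'
    · nlinarith
    · have key := concave_combo hφ hs hv (hsu'.trans huv) ⟨hsu, huv.le⟩
      nlinarith [key]
  · have hvs : v ≤ s := by
      by_contra hc
      push_neg at hc
      exact hout ⟨hsu, hc⟩
    rcases eq_or_lt_of_le hvs with rfl | hvs'
    · nlinarith
    · have key := concave_combo hφ hu hs (huv.trans hvs') ⟨huv.le, hvs⟩
      nlinarith [key]

lemma affine_concaveOn (m k : ℝ) : ConcaveOn ℝ (Icc (0:ℝ) 1) (fun s => m * s + k) := by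
  refine ⟨convex_Icc 0 1, fun x hx y hy a b ha hb hab => ?_⟩
  simp only [smul_eq_mul]
  apply le_of_eq
  have hb' : b = 1 - a := by linarith
  subst hb'
  ring

lemma chord (hbv : BoundedVariationOn h (Icc 0 1)) (h0 : h 0 = 0)
    {a b x z : ℝ} (ha0 : 0 ≤ a) (hb1 : b ≤ 1)
    (hD : ∀ s ∈ Ioo a b, uscMod h s < concaveEnvelope h s)
    (hax : a < x) (hxz : x < z) (hzb : z < b) :
    ∀ y ∈ Icc x z, concaveEnvelope h y =
      concaveEnvelope h x + (concaveEnvelope h z - concaveEnvelope h x) / (z - x) * (y - x) := by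
  set φ := concaveEnvelope h with hφdef
  set m := (φ z - φ x) / (z - x) with hmdef
  set L := fun s : ℝ => φ x + m * (s - x) with hLdef
  have henvc : ConcaveOn ℝ (Icc 0 1) φ := env_concave hbv h0
  have hxz01 : Icc x z ⊆ Ioo (0:ℝ) 1 := by
    intro s hs
    exact ⟨by linarith [hs.1], by linarith [hs.2]⟩
  have hab01 : Ioo a b ⊆ Ioo (0:ℝ) 1 := by
    intro s hs
    exact ⟨by linarith [hs.1], by linarith [hs.2]⟩
  have hxzab : Icc x z ⊆ Ioo a b := fun s hs => ⟨by linarith [hs.1], by linarith [hs.2]⟩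
  have hx01 : x ∈ Icc (0:ℝ) 1 := Ioo_subset_Icc_self (hxz01 ⟨le_refl x, hxz.le⟩)
  have hz01 : z ∈ Icc (0:ℝ) 1 := Ioo_subset_Icc_self (hxz01 ⟨hxz.le, le_refl z⟩)
  have hinside : ∀ y ∈ Icc x z, L y ≤ φ y := fun y hy =>
    concave_line_inside henvc hx01 hz01 hxz hy
  have houtside : ∀ s ∈ Icc (0:ℝ) 1, s ∉ Ioo x z → φ s ≤ L s := fun s hs hout =>
    concave_line_outside henvc hx01 hz01 hxz hs hout
  have hLcont : Continuous L := by
    apply continuous_const.add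
    exact continuous_const.mul (continuous_id.sub continuous_const)
  have hφLcont : ContinuousOn (fun s => φ s - L s) (Icc x z) :=
    ((env_contOn hbv h0).mono (hxz01.trans (fun u hu => hu))).sub hLcont.continuousOn
  obtain ⟨N, hN⟩ : BddAbove ((fun s => φ s - L s) '' Icc x z) :=
    isCompact_Icc.bddAbove_image hφLcont
  have hbddA : BddAbove ((fun s => uscMod h s - L s) '' Icc x z) := by
    refine ⟨N, ?_⟩
    rintro y ⟨s, hs, rfl⟩
    have h1 : uscMod h s ≤ φ s := uscMod_le_env hbv h0 s (Ioo_subset_Icc_self (hxz01 hs))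
    have h2 : φ s - L s ≤ N := hN ⟨s, hs, rfl⟩
    simp only
    linarith
  have hne : ((fun s => uscMod h s - L s) '' Icc x z).Nonempty :=
    ⟨_, ⟨x, ⟨le_refl x, hxz.le⟩, rfl⟩⟩
  set c := sSup ((fun s => uscMod h s - L s) '' Icc x z) with hcdef
  have hc_le : ∀ s ∈ Icc x z, uscMod h s - L s ≤ c := fun s hs =>
    le_csSup hbddA ⟨s, hs, rfl⟩
  set c' := max c 0 with hc'def
  have hc'0 : 0 ≤ c' := le_max_right _ _
  set G := fun s => min (φ s) (L s + c') with hGdef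
  have hGconc : ConcaveOn ℝ (Icc 0 1) G := by
    apply henvc.inf
    have : (fun s => L s + c') = fun s => m * s + (φ x - m * x + c') := by
      funext s; simp only [hLdef]; ring
    rw [this]
    exact affine_concaveOn m (φ x - m * x + c')
  have hGadm : Adm h G := by
    refine ⟨hGconc, ?_, ?_⟩
    · have h0out : (0:ℝ) ∉ Ioo x z := by
        intro hcon
        have : (0:ℝ) < x := by linarith
        exact absurd hcon.1 (by linarith)
      have h1 : φ 0 ≤ L 0 := houtside 0 (Set.left_mem_Icc.2 zero_le_one) h0out
      have h2 : φ 0 = 0 := env_zero hbv h0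
      simp only [hGdef]
      rw [min_eq_left (by linarith)]
      exact h2
    · intro s hs
      apply le_min (le_env hbv h0 hs)
      by_cases hmem : s ∈ Icc x z
      · have h1 : h s ≤ uscMod h s := h_le_uscMod s
        have h2 : uscMod h s - L s ≤ c := hc_le s hmem
        have h3 : c ≤ c' := le_max_left _ _
        linarith
      · have hout : s ∉ Ioo x z := fun hcon => hmem (Ioo_subset_Icc_self hcon)
        have h1 : φ s ≤ L s := houtside s hs hout
        have h2 : h s ≤ φ s := le_env hbv h0 hs
        linarith
  have key : ∀ y ∈ Icc (0:ℝ) 1, φ y ≤ L y + c' := fun y hy =>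
    (env_le hGadm hy).trans (min_le_right _ _)
  have hc_nonpos : c ≤ 0 := by
    by_contra hcpos
    push_neg at hcpos
    have hc'c : c' = c := max_eq_left hcpos.le
    -- attain the sup along a subsequence
    have hex : ∀ n : ℕ, ∃ u ∈ Icc x z, c - 1 / (n + 1) < uscMod h u - L u := by
      intro n
      have hlt : c - 1 / (n + 1 : ℝ) < c := by
        have : (0:ℝ) < 1 / (n + 1) := by positivity
        linarith
      obtain ⟨y, ⟨u, hu, rfl⟩, hy⟩ := exists_lt_of_lt_csSup hne hlt
      exact ⟨u, hu, hy⟩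
    choose u hu hval using hex
    obtain ⟨t1, ht1, ψ, hψ, hconv⟩ := isCompact_Icc.tendsto_subseq hu
    have ht1ab : t1 ∈ Ioo a b := hxzab ht1
    have ht101 : t1 ∈ Ioo (0:ℝ) 1 := hab01 ht1ab
    have hub : uscMod h t1 - L t1 < c := by
      have h1 : uscMod h t1 < φ t1 := hD t1 ht1ab
      have h2 : φ t1 ≤ L t1 + c' := key t1 (Ioo_subset_Icc_self ht101)
      rw [hc'c] at h2
      linarith
    set ε := (c - (uscMod h t1 - L t1)) / 2 with hεdef
    have hεpos : 0 < ε := div_pos (sub_pos.2 hub) two_pos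
    obtain ⟨δ, hδpos, hδsub, hδbnd⟩ := usc_bound hbv ht101 (show (0:ℝ) < ε / 2 by linarith)
    set δ2 := min δ (ε / (2 * (|m| + 1))) with hδ2def
    have hδ2pos : 0 < δ2 := lt_min hδpos (by positivity)
    have hLclose : ∀ s, |s - t1| < δ2 → |L s - L t1| ≤ ε / 2 := by
      intro s hs
      have : L s - L t1 = m * (s - t1) := by simp only [hLdef]; ring
      rw [this, abs_mul]
      have h1 : |s - t1| ≤ ε / (2 * (|m| + 1)) := le_of_lt (lt_of_lt_of_le hs (min_le_right _ _))
      have h2 : |m| * |s - t1| ≤ |m| * (ε / (2 * (|m| + 1))) :=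
        mul_le_mul_of_nonneg_left h1 (abs_nonneg m)
      have h3 : |m| * (ε / (2 * (|m| + 1))) ≤ ε / 2 := by
        rw [mul_comm, div_mul_eq_mul_div, div_le_div_iff₀ (by positivity) two_pos]
        nlinarith [abs_nonneg m, hεpos.le]
      linarith
    -- pick a large index
    have hball : ∀ᶠ k in Filter.atTop, |u (ψ k) - t1| < δ2 := by
      have := hconv.eventually (Metric.ball_mem_nhds t1 hδ2pos)
      filter_upwards [this] with k hk
      simpa [Real.dist_eq] using hk
    obtain ⟨K, hK⟩ := exists_nat_one_div_lt hεpos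
    have hbig : ∀ᶠ k in Filter.atTop, (1 : ℝ) / (ψ k + 1) < ε := by
      filter_upwards [Filter.eventually_ge_atTop K] with k hk
      have h1 : (K : ℝ) + 1 ≤ (ψ k : ℝ) + 1 := by
        have : (K : ℝ) ≤ ψ k := by
          exact_mod_cast hk.trans (hψ.le_apply)
        linarith
      calc (1:ℝ) / (ψ k + 1) ≤ 1 / (K + 1) :=
            one_div_le_one_div_of_le (by positivity) h1
        _ < ε := hK
    obtain ⟨k, hk1, hk2⟩ := (hball.and hbig).exists
    set s := u (ψ k) with hsdef
    have hsmem : s ∈ Ioo (t1 - δ) (t1 + δ) := by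
      have h1 : |s - t1| < δ := lt_of_lt_of_le hk1 (min_le_left _ _)
      rw [abs_lt] at h1
      constructor <;> [linarith [h1.1]; linarith [h1.2]]
    have h1 : uscMod h s < uscMod h t1 + ε / 2 := hδbnd s hsmem
    have h2 : |L s - L t1| ≤ ε / 2 := hLclose s hk1
    have h3 : c - 1 / ((ψ k : ℝ) + 1) < uscMod h s - L s := hval (ψ k)
    have h4 : uscMod h s - L s < uscMod h t1 - L t1 + ε := by
      have := abs_le.1 h2
      linarith [this.1]
    have h5 : uscMod h t1 - L t1 + ε = c - ε := by simp only [hεdef]; ring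
    have h6 : c - ε < uscMod h s - L s := (sub_lt_sub_left hk2 c).trans h3
    exact lt_irrefl _ (h6.trans (h4.trans_eq h5))
  have hc'eq : c' = 0 := max_eq_right hc_nonpos
  intro y hy
  have h1 : L y ≤ φ y := hinside y hy
  have h2 : φ y ≤ L y := by
    have := key y (Ioo_subset_Icc_self (hxz01 hy))
    rw [hc'eq] at this
    linarith
  have : φ y = L y := le_antisymm h2 h1
  rw [this]

lemma open_preconn {A : Set ℝ} (hA : IsOpen A) (hconn : IsPreconnected A)
    (hne : A.Nonempty) (hsub : A ⊆ Ioo 0 1) :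
    sInf A < sSup A ∧ A = Ioo (sInf A) (sSup A) := by
  have hbddb : BddBelow A := ⟨0, fun y hy => (hsub hy).1.le⟩
  have hbdda : BddAbove A := ⟨1, fun y hy => (hsub hy).2.le⟩
  have hlt : ∀ y ∈ A, sInf A < y ∧ y < sSup A := by
    intro y hy
    obtain ⟨ε, hε, hball⟩ := Metric.isOpen_iff.1 hA y hy
    rw [Real.ball_eq_Ioo] at hball
    have h1 : y - ε / 2 ∈ A := hball ⟨by linarith, by linarith⟩
    have h2 : y + ε / 2 ∈ A := hball ⟨by linarith, by linarith⟩
    exact ⟨lt_of_le_of_lt (csInf_le hbddb h1) (by linarith),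
      lt_of_lt_of_le (by linarith : y < y + ε / 2) (le_csSup hbdda h2)⟩
  obtain ⟨x, hx⟩ := hne
  constructor
  · exact lt_trans (hlt x hx).1 (hlt x hx).2
  · apply Subset.antisymm
    · intro y hy
      exact (hlt y hy)
    · intro y hy
      obtain ⟨u, hu, huy⟩ := exists_lt_of_csInf_lt ⟨x, hx⟩ hy.1
      obtain ⟨v, hv, hyv⟩ := exists_lt_of_lt_csSup ⟨x, hx⟩ hy.2
      exact hconn.ordConnected.out hu hv ⟨huy.le, hyv.le⟩

end Thm9

open Thm9

/-- the set where `ĥ` differs from the concave envelope `h*` is a union of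
disjoint open intervals, and `h*` is affine on each of them. -/
theorem uscMod_ne_concaveEnvelope_structure (h : ℝ → ℝ)
    (hbv : BoundedVariationOn h (Icc 0 1)) (h0 : h 0 = 0) :
    ∃ S : Set (Set ℝ),
      (∀ A ∈ S, ∃ a b : ℝ, a < b ∧ A = Ioo a b) ∧
      S.PairwiseDisjoint id ∧
      {t : ℝ | t ∈ Icc (0:ℝ) 1 ∧ uscMod h t ≠ concaveEnvelope h t} = ⋃₀ S ∧
      ∀ A ∈ S, ∃ c d : ℝ, ∀ t ∈ A, concaveEnvelope h t = c * t + d := by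
  classical
  set D := {t : ℝ | t ∈ Icc (0:ℝ) 1 ∧ uscMod h t ≠ concaveEnvelope h t} with hDdef
  have hD1 : ∀ t ∈ D, t ∈ Ioo (0:ℝ) 1 ∧ uscMod h t < concaveEnvelope h t := by
    intro t ht
    obtain ⟨ht01, htne⟩ := ht
    have hlt : uscMod h t < concaveEnvelope h t :=
      lt_of_le_of_ne (uscMod_le_env hbv h0 t ht01) htne
    have ht0 : t ≠ 0 := by
      rintro rfl
      apply htne
      rw [uscMod, if_neg (by simp)]
      rw [h0, env_zero hbv h0]
    have ht1' : t ≠ 1 := by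
      rintro rfl
      apply htne
      rw [uscMod, if_neg (by simp), env_one hbv h0]
    exact ⟨⟨lt_of_le_of_ne ht01.1 (Ne.symm ht0), lt_of_le_of_ne ht01.2 ht1'⟩, hlt⟩
  have hDopen : IsOpen D := by
    rw [isOpen_iff_mem_nhds]
    intro t ht
    obtain ⟨ht01, hlt⟩ := hD1 t ht
    obtain ⟨ε, hε, hεeq⟩ : ∃ ε : ℝ, 0 < ε ∧ uscMod h t + 2 * ε = concaveEnvelope h t :=
      ⟨(concaveEnvelope h t - uscMod h t) / 2, div_pos (sub_pos.2 hlt) two_pos, by ring⟩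
    obtain ⟨δ, hδpos, hδsub, hδbnd⟩ := usc_bound hbv ht01 hε
    have hcont : ContinuousAt (concaveEnvelope h) t :=
      (env_contOn hbv h0).continuousAt (isOpen_Ioo.mem_nhds ht01)
    have hev1 : ∀ᶠ s in nhds t, concaveEnvelope h t - ε < concaveEnvelope h s :=
      hcont.eventually (eventually_gt_nhds (by linarith))
    have hev2 : ∀ᶠ s in nhds t, s ∈ Ioo (t - δ) (t + δ) :=
      Ioo_mem_nhds (by linarith) (by linarith)
    filter_upwards [hev1, hev2] with s hs1 hs2
    refine ⟨Ioo_subset_Icc_self (hδsub hs2), ne_of_lt ?_⟩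
    have h1 : uscMod h s < uscMod h t + ε := hδbnd s hs2
    linarith
  refine ⟨{A | ∃ t ∈ D, A = connectedComponentIn D t}, ?_, ?_, ?_, ?_⟩
  · rintro A ⟨t, htD, rfl⟩
    obtain ⟨hlt, heq⟩ := open_preconn (hDopen.connectedComponentIn)
      isPreconnected_connectedComponentIn ⟨t, mem_connectedComponentIn htD⟩
      (fun y hy => (hD1 y (connectedComponentIn_subset D t hy)).1)
    exact ⟨_, _, hlt, heq⟩
  · rintro A ⟨t, htD, rfl⟩ B ⟨t', ht'D, rfl⟩ hAB
    simp only [Function.onFun, id]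
    rw [Set.disjoint_left]
    intro z hzA hzB
    exact hAB ((connectedComponentIn_eq hzA).trans (connectedComponentIn_eq hzB).symm)
  · apply Subset.antisymm
    · intro t ht
      exact ⟨connectedComponentIn D t, ⟨t, ht, rfl⟩, mem_connectedComponentIn ht⟩
    · rintro t ⟨A, ⟨t', ht'D, rfl⟩, htA⟩
      exact connectedComponentIn_subset D t' htA
  · rintro A ⟨t, htD, rfl⟩
    have hAsub : connectedComponentIn D t ⊆ D := connectedComponentIn_subset D t
    have hAsub01 : connectedComponentIn D t ⊆ Ioo (0:ℝ) 1 :=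
      fun y hy => (hD1 y (hAsub hy)).1
    have hAne : (connectedComponentIn D t).Nonempty := ⟨t, mem_connectedComponentIn htD⟩
    obtain ⟨hlt, heq⟩ := open_preconn (hDopen.connectedComponentIn)
      isPreconnected_connectedComponentIn hAne hAsub01
    set a := sInf (connectedComponentIn D t) with hadef
    set b := sSup (connectedComponentIn D t) with hbdef
    have ha0 : 0 ≤ a := le_csInf hAne (fun y hy => (hAsub01 hy).1.le)
    have hb1 : b ≤ 1 := csSup_le hAne (fun y hy => (hAsub01 hy).2.le)
    have hD' : ∀ s ∈ Ioo a b, uscMod h s < concaveEnvelope h s := by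
      intro s hs
      rw [← heq] at hs
      exact (hD1 s (hAsub hs)).2
    -- fixed interior points
    obtain ⟨x0, z0, hax0, hx0z0, hz0b⟩ : ∃ x0 z0 : ℝ, a < x0 ∧ x0 < z0 ∧ z0 < b :=
      ⟨a + (b - a) / 3, a + 2 * (b - a) / 3, by linarith, by linarith, by linarith⟩
    refine ⟨(concaveEnvelope h z0 - concaveEnvelope h x0) / (z0 - x0),
      concaveEnvelope h x0 -
        (concaveEnvelope h z0 - concaveEnvelope h x0) / (z0 - x0) * x0, ?_⟩
    intro s hsA
    rw [heq] at hsA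
    obtain ⟨x, z, hax, hxlo, hzhi, hzb⟩ :
        ∃ x z : ℝ, a < x ∧ (x < s ∧ x < x0) ∧ (s < z ∧ z0 < z) ∧ z < b := by
      refine ⟨(a + min s x0) / 2, (max s z0 + b) / 2, ?_, ⟨?_, ?_⟩, ⟨?_, ?_⟩, ?_⟩
      · have h1 : a < min s x0 := lt_min hsA.1 hax0
        linarith
      · have h1 : a < min s x0 := lt_min hsA.1 hax0
        have h2 : min s x0 ≤ s := min_le_left _ _
        linarith
      · have h1 : a < min s x0 := lt_min hsA.1 hax0
        have h2 : min s x0 ≤ x0 := min_le_right _ _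
        linarith
      · have h1 : max s z0 < b := max_lt hsA.2 hz0b
        have h2 : s ≤ max s z0 := le_max_left _ _
        linarith
      · have h1 : max s z0 < b := max_lt hsA.2 hz0b
        have h2 : z0 ≤ max s z0 := le_max_right _ _
        linarith
      · have h1 : max s z0 < b := max_lt hsA.2 hz0b
        linarith
    have hxz : x < z := hxlo.1.trans hzhi.1
    have hch := chord hbv h0 ha0 hb1 hD' hax hxz hzb
    have hx0ne : z0 - x0 ≠ 0 := by linarith
    have e_s : concaveEnvelope h s = concaveEnvelope h x +
        (concaveEnvelope h z - concaveEnvelope h x) / (z - x) * (s - x) :=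
      hch s ⟨hxlo.1.le, hzhi.1.le⟩
    have e_x0 : concaveEnvelope h x0 = concaveEnvelope h x +
        (concaveEnvelope h z - concaveEnvelope h x) / (z - x) * (x0 - x) :=
      hch x0 ⟨hxlo.2.le, (hx0z0.trans hzhi.2).le⟩
    have e_z0 : concaveEnvelope h z0 = concaveEnvelope h x +
        (concaveEnvelope h z - concaveEnvelope h x) / (z - x) * (z0 - x) :=
      hch z0 ⟨(hxlo.2.trans hx0z0).le, hzhi.2.le⟩
    have hm0 : (concaveEnvelope h z0 - concaveEnvelope h x0) / (z0 - x0) =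
        (concaveEnvelope h z - concaveEnvelope h x) / (z - x) := by
      rw [e_x0, e_z0]
      field_simp
      ring
    rw [hm0, e_s, e_x0]
    ring
end
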